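/- Vertical tangent directions are annihilated by the MPS tangent map: let A be an MPS parameter with open boundary conditions, let x(n) be complex D_n×D_n matrices for n = 0,…,N with x(0) = 0 and x(N) = 0, let α ∈ ℂ, and define B^s(n) = A^s(n)·x(n) − x(n−1)·A^s(n) + α·A^s(n). Then Φ[B; A] = N·α·Ψ[A]; in particular, for α = 0 one has Φ[B; A] = 0. -/

import Mathlib

/-!
STATEMENT 6: Vertical tangent directions are annihilated by the MPS tangent map:
with `B^s(n) = A^s(n)·x(n) − x(n−1)·A^s(n) + α·A^s(n)` and `x 0 = x N = 0`,
one has `Φ[B; A] = N·α·Ψ[A]`.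
-/

open Matrix

noncomputable section

namespace MPS

variable {N : ℕ} {q : Fin N → ℕ} {D : ℕ → ℕ}

/-- The partial ordered product `A^{s_0}(0) ⋯ A^{s_{k-1}}(k-1)`. -/
def prodAux (A : (n : Fin N) → Fin (q n) → Matrix (Fin (D n.val)) (Fin (D (n.val + 1))) ℂ)
    (s : (n : Fin N) → Fin (q n)) : (k : ℕ) → k ≤ N → Matrix (Fin (D 0)) (Fin (D k)) ℂ
  | 0, _ => 1
  | k + 1, h => prodAux A s k (Nat.le_of_succ_le h) * A ⟨k, h⟩ (s ⟨k, h⟩)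

/-- The matrix product state `Ψ[A]`, as the family of its coefficients
`tr[A^{s_1}(1) ⋯ A^{s_N}(N)]`. -/
def psi (hD : D N = D 0)
    (A : (n : Fin N) → Fin (q n) → Matrix (Fin (D n.val)) (Fin (D (n.val + 1))) ℂ) :
    ((n : Fin N) → Fin (q n)) → ℂ :=
  fun s => Matrix.trace ((prodAux A s N le_rfl).submatrix id (Fin.cast hD.symm))

/-- The MPS tangent vector `Φ[B; A]`, whose coefficient on the basis vector indexed by
`s` is `Σ_{n=1}^N tr[A^{s_1}(1) ⋯ B^{s_n}(n) ⋯ A^{s_N}(N)]`. -/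
def phi (hD : D N = D 0)
    (A B : (n : Fin N) → Fin (q n) → Matrix (Fin (D n.val)) (Fin (D (n.val + 1))) ℂ) :
    ((n : Fin N) → Fin (q n)) → ℂ :=
  fun s => ∑ n : Fin N, psi hD (Function.update A n (B n)) s

def contAux (A : (n : Fin N) → Fin (q n) → Matrix (Fin (D n.val)) (Fin (D (n.val + 1))) ℂ)
    (s : (n : Fin N) → Fin (q n)) (m : ℕ) (X : Matrix (Fin (D 0)) (Fin (D m)) ℂ) :
    (k : ℕ) → k ≤ N → Matrix (Fin (D 0)) (Fin (D k)) ℂ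
  | 0, _ => if h : m = 0 then h ▸ X else 0
  | k + 1, hk => if h : m = k + 1 then h ▸ X
      else contAux A s m X k (Nat.le_of_succ_le hk) * A ⟨k, hk⟩ (s ⟨k, hk⟩)

variable (A : (n : Fin N) → Fin (q n) → Matrix (Fin (D n.val)) (Fin (D (n.val + 1))) ℂ)
    (s : (n : Fin N) → Fin (q n))

theorem prodAux_succ (k : ℕ) (h : k + 1 ≤ N) :
    prodAux A s (k + 1) h
      = prodAux A s k (Nat.le_of_succ_le h) * A ⟨k, h⟩ (s ⟨k, h⟩) := rfl

theorem contAux_succ (m : ℕ) (X : Matrix (Fin (D 0)) (Fin (D m)) ℂ) (k : ℕ)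
    (hk : k + 1 ≤ N) (h : ¬ m = k + 1) :
    contAux A s m X (k + 1) hk
      = contAux A s m X k (Nat.le_of_succ_le hk) * A ⟨k, hk⟩ (s ⟨k, hk⟩) := by
  conv_lhs => rw [contAux]
  rw [dif_neg h]

theorem contAux_self (m : ℕ) (X : Matrix (Fin (D 0)) (Fin (D m)) ℂ) (h : m ≤ N) :
    contAux A s m X m h = X := by
  cases m <;> simp [contAux]

theorem contAux_zero (m : ℕ) : ∀ (k : ℕ) (h : k ≤ N),
    contAux A s m (0 : Matrix (Fin (D 0)) (Fin (D m)) ℂ) k h = 0 := by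
  intro k
  induction k with
  | zero => intro h; unfold contAux; split <;> [subst ‹m = 0›; skip] <;> rfl
  | succ k ih =>
    intro h; unfold contAux; split
    · subst ‹m = k + 1›; rfl
    · rw [ih, Matrix.zero_mul]

theorem contAux_add (m : ℕ) (X Y : Matrix (Fin (D 0)) (Fin (D m)) ℂ) :
    ∀ (k : ℕ) (h : k ≤ N),
    contAux A s m (X + Y) k h = contAux A s m X k h + contAux A s m Y k h := by
  intro k
  induction k with
  | zero =>
    intro h; unfold contAux; split
    · subst ‹m = 0›; rfl
    · simp
  | succ k ih =>
    intro h; unfold contAux; split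
    · subst ‹m = k + 1›; rfl
    · rw [ih, Matrix.add_mul]

theorem contAux_smul (m : ℕ) (c : ℂ) (X : Matrix (Fin (D 0)) (Fin (D m)) ℂ) :
    ∀ (k : ℕ) (h : k ≤ N),
    contAux A s m (c • X) k h = c • contAux A s m X k h := by
  intro k
  induction k with
  | zero =>
    intro h; unfold contAux; split
    · subst ‹m = 0›; rfl
    · simp
  | succ k ih =>
    intro h; unfold contAux; split
    · subst ‹m = k + 1›; rfl
    · rw [ih, Matrix.smul_mul]

theorem contAux_sub (m : ℕ) (X Y : Matrix (Fin (D 0)) (Fin (D m)) ℂ)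
    (k : ℕ) (h : k ≤ N) :
    contAux A s m (X - Y) k h = contAux A s m X k h - contAux A s m Y k h := by
  have := contAux_add A s m (X - Y) Y k h
  rw [sub_add_cancel] at this
  rw [this]; abel

theorem contAux_lt (m : ℕ) (X : Matrix (Fin (D 0)) (Fin (D m)) ℂ) :
    ∀ (k : ℕ) (h : k ≤ N), k < m → contAux A s m X k h = 0 := by
  intro k
  induction k with
  | zero => intro h hk; unfold contAux; rw [dif_neg (by omega)]
  | succ k ih =>
    intro h hk
    rw [contAux_succ A s m X k h (by omega), ih _ (by omega), Matrix.zero_mul]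

theorem contAux_prodAux (m : ℕ) (hm : m ≤ N) : ∀ (k : ℕ) (h : k ≤ N), m ≤ k →
    contAux A s m (prodAux A s m hm) k h = prodAux A s k h := by
  intro k
  induction k with
  | zero =>
    intro h hmk
    have hm0 : m = 0 := by omega
    subst hm0
    exact contAux_self A s 0 _ h
  | succ k ih =>
    intro h hmk
    by_cases hc : m = k + 1
    · subst hc; exact contAux_self A s _ _ h
    · rw [contAux_succ A s m _ k h hc, ih _ (by omega), prodAux_succ]

theorem contAux_shift (m : ℕ) (hm : m < N) (X : Matrix (Fin (D 0)) (Fin (D m)) ℂ) :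
    ∀ (k : ℕ) (h : k ≤ N), m + 1 ≤ k →
    contAux A s (m + 1) (X * A ⟨m, hm⟩ (s ⟨m, hm⟩)) k h = contAux A s m X k h := by
  intro k
  induction k with
  | zero => omega
  | succ k ih =>
    intro h hmk
    by_cases hc : m + 1 = k + 1
    · have hmk' : m = k := by omega
      subst hmk'
      rw [contAux_self, contAux_succ A s m X m h (by omega), contAux_self]
    · rw [contAux_succ A s (m + 1) _ k h hc, contAux_succ A s m X k h (by omega),
        ih _ (by omega)]

theorem contAux_update (n : Fin N) (c : Fin (q n) → Matrix (Fin (D n.val)) (Fin (D (n.val + 1))) ℂ)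
    (m : ℕ) (hn : n.val < m) (X : Matrix (Fin (D 0)) (Fin (D m)) ℂ) :
    ∀ (k : ℕ) (h : k ≤ N),
    contAux (Function.update A n c) s m X k h = contAux A s m X k h := by
  intro k
  induction k with
  | zero => intro h; rfl
  | succ k ih =>
    intro h
    by_cases hc : m = k + 1
    · subst hc; rw [contAux_self, contAux_self]
    · rw [contAux_succ _ s m X k h hc, contAux_succ A s m X k h hc]
      by_cases hk : k + 1 < m
      · rw [contAux_lt _ s m X k _ (by omega), contAux_lt A s m X k _ (by omega),
          Matrix.zero_mul, Matrix.zero_mul]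
      · have hne : (⟨k, h⟩ : Fin N) ≠ n := by
          intro he
          have : k = n.val := by rw [← he]
          omega
        rw [ih, Function.update_of_ne hne]

theorem prodAux_update_le (n : Fin N)
    (c : Fin (q n) → Matrix (Fin (D n.val)) (Fin (D (n.val + 1))) ℂ) :
    ∀ (k : ℕ) (h : k ≤ N), k ≤ n.val →
    prodAux (Function.update A n c) s k h = prodAux A s k h := by
  intro k
  induction k with
  | zero => intro h _; rfl
  | succ k ih =>
    intro h hk
    have hne : (⟨k, h⟩ : Fin N) ≠ n := by
      intro he
      have : k = n.val := by rw [← he]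
      omega
    rw [prodAux_succ, prodAux_succ, ih _ (by omega), Function.update_of_ne hne]

theorem prodAux_update (n : Fin N)
    (c : Fin (q n) → Matrix (Fin (D n.val)) (Fin (D (n.val + 1))) ℂ) :
    ∀ (k : ℕ) (h : k ≤ N), n.val < k →
    prodAux (Function.update A n c) s k h
      = contAux A s (n.val + 1)
          (prodAux A s n.val (le_of_lt n.isLt) * c (s n)) k h := by
  intro k
  induction k with
  | zero => omega
  | succ k ih =>
    intro h hk
    by_cases hc : n.val = k
    · subst hc
      rw [contAux_self, prodAux_succ, prodAux_update_le A s n c n.val _ le_rfl]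
      congr 1
      simp [Fin.eta, Function.update_self]
    · have hk' : n.val < k := by omega
      rw [prodAux_succ, contAux_succ A s _ _ k h (by omega), ih _ hk']
      have hne : (⟨k, h⟩ : Fin N) ≠ n := by
        intro he
        have : k = n.val := by rw [← he]
        omega
      rw [Function.update_of_ne hne]

end MPS

/-- **Vertical directions are annihilated by the MPS tangent map:** if
`B^s(n) = A^s(n)·x(n) − x(n−1)·A^s(n) + α·A^s(n)` with `x 0 = 0` and `x N = 0`, then
`Φ[B; A] = N·α·Ψ[A]` (in particular `Φ[B; A] = 0` for `α = 0`). -/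
theorem mps_vertical_tangent (N : ℕ) (q : Fin N → ℕ) (D : ℕ → ℕ)
    (h0 : D 0 = 1) (hN : D N = 1)
    (A : (n : Fin N) → Fin (q n) → Matrix (Fin (D n.val)) (Fin (D (n.val + 1))) ℂ)
    (x : (k : ℕ) → Matrix (Fin (D k)) (Fin (D k)) ℂ) (hx0 : x 0 = 0) (hxN : x N = 0)
    (α : ℂ) :
    MPS.phi (hN.trans h0.symm) A
        (fun n s => A n s * x (n.val + 1) - x n.val * A n s + α • A n s)
      = ((N : ℂ) * α) • MPS.psi (hN.trans h0.symm) A := by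
  funext s
  set hD : D N = D 0 := hN.trans h0.symm with hDdef
  set e : Fin (D 0) → Fin (D N) := Fin.cast hD.symm with hedef
  -- telescoping function
  set g : ℕ → ℂ := fun k =>
    if h : k ≤ N then
      Matrix.trace ((MPS.contAux A s k (MPS.prodAux A s k h * x k) N le_rfl).submatrix id e)
    else 0 with hgdef
  have key : ∀ n : Fin N,
      MPS.psi hD (Function.update A n
        (fun t => A n t * x (n.val + 1) - x n.val * A n t + α • A n t)) s
      = g (n.val + 1) - g n.val + α * MPS.psi hD A s := by
    intro n
    have hn1 : n.val + 1 ≤ N := n.isLt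
    have hnle : n.val ≤ N := le_of_lt n.isLt
    unfold MPS.psi
    rw [MPS.prodAux_update A s n _ N le_rfl n.isLt]
    have hX : MPS.prodAux A s n.val (le_of_lt n.isLt)
          * (A n (s n) * x (n.val + 1) - x n.val * A n (s n) + α • A n (s n))
        = (MPS.prodAux A s (n.val + 1) hn1 * x (n.val + 1)
            - (MPS.prodAux A s n.val hnle * x n.val) * A ⟨n.val, n.isLt⟩ (s ⟨n.val, n.isLt⟩))
          + α • MPS.prodAux A s (n.val + 1) hn1 := by
      rw [MPS.prodAux_succ]
      simp only [Fin.eta]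
      rw [Matrix.mul_add, Matrix.mul_sub, Matrix.mul_smul, ← Matrix.mul_assoc,
        ← Matrix.mul_assoc]
    rw [hX, MPS.contAux_add, MPS.contAux_sub, MPS.contAux_smul,
      MPS.contAux_shift A s n.val n.isLt _ N le_rfl hn1,
      MPS.contAux_prodAux A s (n.val + 1) hn1 N le_rfl hn1]
    have hg1 : g (n.val + 1)
        = Matrix.trace ((MPS.contAux A s (n.val + 1)
            (MPS.prodAux A s (n.val + 1) hn1 * x (n.val + 1)) N le_rfl).submatrix id e) := by
      simp only [hgdef]; rw [dif_pos hn1]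
    have hg2 : g n.val
        = Matrix.trace ((MPS.contAux A s n.val
            (MPS.prodAux A s n.val hnle * x n.val) N le_rfl).submatrix id e) := by
      simp only [hgdef]; rw [dif_pos hnle]
    rw [hg1, hg2]
    simp [Matrix.submatrix_add, Matrix.submatrix_sub, Matrix.submatrix_smul,
      Matrix.trace_add, Matrix.trace_sub, Matrix.trace_smul, smul_eq_mul]
    rfl
  -- now sum
  unfold MPS.phi
  calc (∑ n : Fin N, MPS.psi hD (Function.update A n
          (fun t => A n t * x (n.val + 1) - x n.val * A n t + α • A n t)) s)
      = ∑ n : Fin N, (g (n.val + 1) - g n.val + α * MPS.psi hD A s) := by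
        exact Finset.sum_congr rfl fun n _ => key n
    _ = ∑ i ∈ Finset.range N, (g (i + 1) - g i + α * MPS.psi hD A s) := by
        exact Fin.sum_univ_eq_sum_range (fun i => g (i + 1) - g i + α * MPS.psi hD A s) N
    _ = (g N - g 0) + N * (α * MPS.psi hD A s) := by
        rw [Finset.sum_add_distrib, Finset.sum_range_sub, Finset.sum_const,
          Finset.card_range, nsmul_eq_mul]
    _ = ((N : ℂ) * α) • MPS.psi hD A s := by
        have hgN : g N = 0 := by
          simp only [hgdef]
          rw [dif_pos le_rfl, MPS.contAux_self, hxN, Matrix.mul_zero]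
          simp
        have hg0 : g 0 = 0 := by
          simp only [hgdef]
          rw [dif_pos (Nat.zero_le N), hx0, Matrix.mul_zero, MPS.contAux_zero]
          simp
        rw [hgN, hg0, smul_eq_mul]
        ring
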